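/- arXiv:2107.07086 — 4 statements merged into one kernel-verified Lean document; each statement's English description precedes it below -/
import Mathlib

section
/- Let n ≥ 1, let X_1,…,X_n ∈ ℝ^p, and let w = (w_1,…,w_n) ∈ ℝ^n be a weight vector with w_i ≥ 0 for all i and ∑_{i=1}^n w_i = n. Then the weighted energy distance between the weighted and unweighted empirical distributions of the X_i satisfies E(F^n_{X,w}, F^n_X) = ∫_{ℝ^p} |φ^n_X(t) − φ^n_{X,w}(t)|² / (C_p ‖t‖_2^{1+p}) dt, where C_p = π^{(1+p)/2}/Γ((1+p)/2). -/
open MeasureTheory Finset Filter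
open scoped BigOperators RealInnerProductSpace ENNReal

noncomputable section

abbrev Evec (p : ℕ) := EuclideanSpace ℝ (Fin p)

/-- Doubly-centered distance matrix of the covariates. -/
def Cmat {p : ℕ} (n : ℕ) (X : Fin n → Evec p) (k l : Fin n) : ℝ :=
  ‖X k - X l‖ - (1 / (n : ℝ)) * ∑ j, ‖X k - X j‖ - (1 / (n : ℝ)) * ∑ j, ‖X j - X l‖
    + (1 / (n : ℝ) ^ 2) * ∑ j, ∑ m, ‖X j - X m‖

/-- Doubly-centered distance matrix of the treatment. -/
def Dmat (n : ℕ) (A : Fin n → ℝ) (k l : Fin n) : ℝ :=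
  |A k - A l| - (1 / (n : ℝ)) * ∑ j, |A k - A j| - (1 / (n : ℝ)) * ∑ j, |A j - A l|
    + (1 / (n : ℝ) ^ 2) * ∑ j, ∑ m, |A j - A m|

/-- Weighted distance covariance V²_{n,w}(X, A). -/
def Vnw {p : ℕ} (n : ℕ) (X : Fin n → Evec p) (A : Fin n → ℝ) (w : Fin n → ℝ) : ℝ :=
  (1 / (n : ℝ) ^ 2) * ∑ k, ∑ l, w k * w l * Cmat n X k l * Dmat n A k l

/-- Weighted energy distance E(F^n_{X,w}, F^n_X). -/
def energyX {p : ℕ} (n : ℕ) (X : Fin n → Evec p) (w : Fin n → ℝ) : ℝ :=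
  (2 / (n : ℝ) ^ 2) * ∑ i, ∑ j, w i * ‖X i - X j‖
    - (1 / (n : ℝ) ^ 2) * ∑ i, ∑ j, w i * w j * ‖X i - X j‖
    - (1 / (n : ℝ) ^ 2) * ∑ i, ∑ j, ‖X i - X j‖

/-- Weighted energy distance E(F^n_{A,w}, F^n_A). -/
def energyA (n : ℕ) (A : Fin n → ℝ) (w : Fin n → ℝ) : ℝ :=
  (2 / (n : ℝ) ^ 2) * ∑ i, ∑ j, w i * |A i - A j|
    - (1 / (n : ℝ) ^ 2) * ∑ i, ∑ j, w i * w j * |A i - A j|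
    - (1 / (n : ℝ) ^ 2) * ∑ i, ∑ j, |A i - A j|

/-- The dependence criterion D(w). -/
def Dcrit {p : ℕ} (n : ℕ) (X : Fin n → Evec p) (A : Fin n → ℝ) (w : Fin n → ℝ) : ℝ :=
  Vnw n X A w + energyX n X w + energyA n A w

/-- Weighted empirical joint characteristic function φ^n_{X,A,w}(t,s). -/
def phiXAw {p : ℕ} (n : ℕ) (X : Fin n → Evec p) (A : Fin n → ℝ) (w : Fin n → ℝ)
    (t : Evec p) (s : ℝ) : ℂ :=
  (1 / (n : ℂ)) * ∑ i, (w i : ℂ) * Complex.exp (Complex.I * ((inner ℝ t (X i) : ℝ) + s * A i))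

/-- Weighted empirical characteristic function φ^n_{X,w}(t). -/
def phiXw {p : ℕ} (n : ℕ) (X : Fin n → Evec p) (w : Fin n → ℝ) (t : Evec p) : ℂ :=
  (1 / (n : ℂ)) * ∑ i, (w i : ℂ) * Complex.exp (Complex.I * ((inner ℝ t (X i) : ℝ)))

/-- Weighted empirical characteristic function φ^n_{A,w}(s). -/
def phiAw (n : ℕ) (A : Fin n → ℝ) (w : Fin n → ℝ) (s : ℝ) : ℂ :=
  (1 / (n : ℂ)) * ∑ i, (w i : ℂ) * Complex.exp (Complex.I * (s * A i))

/-- The constant c_d = π^{(1+d)/2} / Γ((1+d)/2). -/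
def cConst (d : ℕ) : ℝ := Real.pi ^ ((1 + (d : ℝ)) / 2) / Real.Gamma ((1 + (d : ℝ)) / 2)

/-- The weight function ω(t,s) = (c_p c_1 ‖t‖^{1+p} |s|²)⁻¹. -/
def omegaW (p : ℕ) (t : Evec p) (s : ℝ) : ℝ :=
  (cConst p * cConst 1 * ‖t‖ ^ (1 + p) * |s| ^ 2)⁻¹

end

section AuxSzekely
open Set

lemma exp_interval {c x : ℝ} (hx : 0 ≤ x) :
    ∫ s in Ioo (0:ℝ) x, c * Real.exp (-(c*s)) = 1 - Real.exp (-(c*x)) := by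
  rw [← integral_Ioc_eq_integral_Ioo, ← intervalIntegral.integral_of_le hx]
  have : ∀ s ∈ uIcc (0:ℝ) x, HasDerivAt (fun s => -Real.exp (-(c*s))) (c * Real.exp (-(c*s))) s := by
    intro s _
    have h1 : HasDerivAt (fun s : ℝ => -(c*s)) (-c) s := by
      simpa using ((hasDerivAt_id s).const_mul c).fun_neg
    have := (Real.hasDerivAt_exp (-(c*s))).comp s h1
    refine this.fun_neg.congr_deriv ?_
    ring
  rw [intervalIntegral.integral_eq_sub_of_hasDerivAt this
    ((by fun_prop : Continuous fun s : ℝ => c * Real.exp (-(c*s))).intervalIntegrable _ _)]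
  simp; ring

lemma lintegral_L2 {c : ℝ} (hc : 0 < c) :
    ∫⁻ x in Ioi (0:ℝ), ENNReal.ofReal (x ^ (-(3:ℝ)/2) * (1 - Real.exp (-(c*x)))) =
      ENNReal.ofReal (2 * Real.sqrt Real.pi * Real.sqrt c) := by
  set K : ℝ × ℝ → ℝ≥0∞ := fun z =>
    if z.2 < z.1 then ENNReal.ofReal (z.1 ^ (-(3:ℝ)/2) * (c * Real.exp (-(c*z.2)))) else 0 with hK
  have hKmeas : Measurable K := by
    apply Measurable.ite (measurableSet_lt measurable_snd measurable_fst) _ measurable_const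
    apply ENNReal.measurable_ofReal.comp
    apply Measurable.mul
    · exact (measurable_id.pow_const _).comp measurable_fst
    · exact (measurable_const.mul ((Real.measurable_exp.comp
        ((measurable_const.mul measurable_snd).neg))))
  -- step 1: rewrite integrand as inner lintegral
  have step1 : ∀ x ∈ Ioi (0:ℝ),
      ENNReal.ofReal (x ^ (-(3:ℝ)/2) * (1 - Real.exp (-(c*x)))) =
        ∫⁻ s in Ioi (0:ℝ), K (x, s) := by
    intro x hx
    have hxpos : (0:ℝ) < x := hx
    have hinner : ∫⁻ s in Ioi (0:ℝ), K (x, s) =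
        ∫⁻ s in Ioo (0:ℝ) x, ENNReal.ofReal (x ^ (-(3:ℝ)/2) * (c * Real.exp (-(c*s)))) := by
      have : ∀ s : ℝ, K (x, s)
          = (Iio x).indicator (fun s => ENNReal.ofReal (x ^ (-(3:ℝ)/2) * (c * Real.exp (-(c*s))))) s := by
        intro s
        simp [hK, Set.indicator_apply, Set.mem_Iio]
      simp_rw [this]
      rw [lintegral_indicator measurableSet_Iio, Measure.restrict_restrict measurableSet_Iio]
      congr 1
      rw [Set.Iio_inter_Ioi]
    rw [hinner]
    have hval : ∫ s in Ioo (0:ℝ) x, x ^ (-(3:ℝ)/2) * (c * Real.exp (-(c*s)))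
        = x ^ (-(3:ℝ)/2) * (1 - Real.exp (-(c*x))) := by
      rw [integral_const_mul, exp_interval hxpos.le]
    rw [← hval]
    rw [ofReal_integral_eq_lintegral_ofReal]
    · apply Integrable.const_mul
      exact ((by fun_prop : Continuous fun s : ℝ => c * Real.exp (-(c*s))).integrableOn_Icc).mono_set
        Ioo_subset_Icc_self
    · filter_upwards [ae_restrict_mem measurableSet_Ioo] with s hs
      have h0 : (0:ℝ) < s := hs.1
      positivity
  rw [setLIntegral_congr_fun measurableSet_Ioi step1]
  -- step 2: swap
  rw [lintegral_lintegral_swap hKmeas.aemeasurable]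
  -- step 3: inner integral over x
  have step3 : ∀ s ∈ Ioi (0:ℝ),
      ∫⁻ x in Ioi (0:ℝ), K (x, s) = ENNReal.ofReal ((2 * s ^ (-(1:ℝ)/2)) * (c * Real.exp (-(c*s)))) := by
    intro s hs
    have hspos : (0:ℝ) < s := hs
    have : ∀ x : ℝ, K (x, s)
        = (Ioi s).indicator (fun x => ENNReal.ofReal (x ^ (-(3:ℝ)/2) * (c * Real.exp (-(c*s))))) x := by
      intro x
      simp [hK, Set.indicator_apply, Set.mem_Ioi]
    simp_rw [this]
    rw [lintegral_indicator measurableSet_Ioi, Measure.restrict_restrict measurableSet_Ioi,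
      Set.Ioi_inter_Ioi, max_eq_left hspos.le]
    have hval : ∫ x in Ioi s, x ^ (-(3:ℝ)/2) * (c * Real.exp (-(c*s)))
        = (2 * s ^ (-(1:ℝ)/2)) * (c * Real.exp (-(c*s))) := by
      rw [integral_mul_const]
      congr 1
      rw [integral_Ioi_rpow_of_lt (by norm_num) hspos]
      norm_num; ring_nf
    rw [← hval, ofReal_integral_eq_lintegral_ofReal]
    · exact (integrableOn_Ioi_rpow_of_lt (by norm_num) hspos).mul_const _
    · filter_upwards [ae_restrict_mem measurableSet_Ioi] with x hx
      have h0 : (0:ℝ) < x := hspos.trans hx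
      positivity
  rw [setLIntegral_congr_fun measurableSet_Ioi step3]
  -- step 4: final Gamma integral
  have hval : ∫ s in Ioi (0:ℝ), (2 * s ^ (-(1:ℝ)/2)) * (c * Real.exp (-(c*s)))
      = 2 * Real.sqrt Real.pi * Real.sqrt c := by
    have h1 : ∫ s in Ioi (0:ℝ), s ^ ((1:ℝ)/2 - 1) * Real.exp (-(c*s))
        = (1/c) ^ ((1:ℝ)/2) * Real.Gamma (1/2) :=
      Real.integral_rpow_mul_exp_neg_mul_Ioi (by norm_num) hc
    have h2 : ∀ s : ℝ, (2 * s ^ (-(1:ℝ)/2)) * (c * Real.exp (-(c*s)))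
        = (2*c) * (s ^ ((1:ℝ)/2 - 1) * Real.exp (-(c*s))) := by
      intro s; norm_num; ring
    simp_rw [h2]
    rw [integral_const_mul, h1, Real.Gamma_one_half_eq]
    rw [← Real.sqrt_eq_rpow, one_div, Real.sqrt_inv]
    have hsc : Real.sqrt c ≠ 0 := (Real.sqrt_pos.mpr hc).ne'
    field_simp
    nlinarith [Real.sq_sqrt hc.le, Real.sqrt_nonneg c, Real.sqrt_nonneg Real.pi]
  rw [← hval, ofReal_integral_eq_lintegral_ofReal]
  · have := integrableOn_rpow_mul_exp_neg_mul_rpow (p := 1) (s := -(1:ℝ)/2) (b := c)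
      (by norm_num) (by norm_num) hc
    have h' : IntegrableOn (fun s : ℝ => s ^ (-(1:ℝ)/2) * Real.exp (-(c*s))) (Ioi 0) := by
      refine this.congr_fun (fun x hx => ?_) measurableSet_Ioi
      simp only [Real.rpow_one]; ring_nf
    have h'' : IntegrableOn (fun s : ℝ => 2 * (s ^ (-(1:ℝ)/2) * Real.exp (-(c*s))) * c) (Ioi 0) :=
      (h'.const_mul 2).mul_const c
    refine h''.congr_fun (fun x hx => ?_) measurableSet_Ioi
    ring
  · filter_upwards [ae_restrict_mem measurableSet_Ioi] with s hs
    have h0 : (0:ℝ) < s := hs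
    positivity

lemma g_integrable {c : ℝ} (hc : 0 < c) :
    IntegrableOn (fun x : ℝ => x ^ (-(3:ℝ)/2) * (1 - Real.exp (-(c*x)))) (Ioi 0) := by
  have hmeas : AEStronglyMeasurable (fun x : ℝ => x ^ (-(3:ℝ)/2) * (1 - Real.exp (-(c*x))))
      (volume.restrict (Ioi 0)) := by
    apply Measurable.aestronglyMeasurable
    exact (measurable_id.pow_const _).mul
      (measurable_const.sub (Real.measurable_exp.comp ((measurable_const.mul measurable_id).neg)))
  have hnn : 0 ≤ᵐ[volume.restrict (Ioi (0:ℝ))] fun x => x ^ (-(3:ℝ)/2) * (1 - Real.exp (-(c*x))) := by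
    filter_upwards [ae_restrict_mem measurableSet_Ioi] with x hx
    have h0 : (0:ℝ) < x := hx
    have : Real.exp (-(c*x)) ≤ 1 := Real.exp_le_one_iff.mpr (by nlinarith)
    exact mul_nonneg (Real.rpow_nonneg h0.le _) (by linarith)
  refine ⟨hmeas, ?_⟩
  rw [hasFiniteIntegral_iff_ofReal hnn, lintegral_L2 hc]
  exact ENNReal.ofReal_lt_top

lemma lintegral_L3 {c : ℝ} (hc : 0 < c) :
    ∫⁻ u in Ioi (0:ℝ), ENNReal.ofReal (u ^ (-(1:ℝ)/2) * (1 - Real.exp (-(c/u)))) =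
      ENNReal.ofReal (2 * Real.sqrt Real.pi * Real.sqrt c) := by
  set f : ℝ → ℝ := fun u => u ^ (-(1:ℝ)/2) * (1 - Real.exp (-(c/u))) with hf
  have key : ∀ x ∈ Ioi (0:ℝ),
      (|(-1:ℝ)| * x ^ ((-1:ℝ)-1)) • f (x ^ (-1:ℝ)) = x ^ (-(3:ℝ)/2) * (1 - Real.exp (-(c*x))) := by
    intro x hx
    have h0 : (0:ℝ) < x := hx
    have h1 : (x ^ (-1:ℝ)) ^ (-(1:ℝ)/2) = x ^ ((1:ℝ)/2) := by
      rw [← Real.rpow_mul h0.le]; norm_num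
    have h2 : c / x ^ (-1:ℝ) = c * x := by
      rw [Real.rpow_neg_one]
      field_simp
    simp only [hf, h1, h2, smul_eq_mul, abs_neg, abs_one]
    rw [one_mul, ← mul_assoc, ← Real.rpow_add h0]
    norm_num
  have hfint : IntegrableOn f (Ioi 0) := by
    rw [← integrableOn_Ioi_comp_rpow_iff f (by norm_num : (-1:ℝ) ≠ 0)]
    exact (g_integrable hc).congr_fun (fun x hx => (key x hx).symm) measurableSet_Ioi
  have hval : ∫ u in Ioi (0:ℝ), f u = 2 * Real.sqrt Real.pi * Real.sqrt c := by
    rw [← integral_comp_rpow_Ioi f (by norm_num : (-1:ℝ) ≠ 0)]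
    rw [setIntegral_congr_fun measurableSet_Ioi key]
    -- now it's the integral of g
    have hnn : 0 ≤ᵐ[volume.restrict (Ioi (0:ℝ))] fun x => x ^ (-(3:ℝ)/2) * (1 - Real.exp (-(c*x))) := by
      filter_upwards [ae_restrict_mem measurableSet_Ioi] with x hx
      have h0 : (0:ℝ) < x := hx
      have : Real.exp (-(c*x)) ≤ 1 := Real.exp_le_one_iff.mpr (by nlinarith)
      exact mul_nonneg (Real.rpow_nonneg h0.le _) (by linarith)
    have := ofReal_integral_eq_lintegral_ofReal (g_integrable hc) hnn
    rw [lintegral_L2 hc] at this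
    have hpos : 0 ≤ ∫ x in Ioi (0:ℝ), x ^ (-(3:ℝ)/2) * (1 - Real.exp (-(c*x))) :=
      integral_nonneg_of_ae hnn
    have hpos2 : 0 ≤ 2 * Real.sqrt Real.pi * Real.sqrt c := by positivity
    exact (ENNReal.ofReal_eq_ofReal_iff hpos hpos2).mp this
  have hnnf : 0 ≤ᵐ[volume.restrict (Ioi (0:ℝ))] f := by
    filter_upwards [ae_restrict_mem measurableSet_Ioi] with u hu
    have h0 : (0:ℝ) < u := hu
    have : Real.exp (-(c/u)) ≤ 1 := Real.exp_le_one_iff.mpr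
      (neg_nonpos_of_nonneg (by positivity))
    simp only [hf]
    exact mul_nonneg (Real.rpow_nonneg h0.le _) (by linarith)
  rw [← ofReal_integral_eq_lintegral_ofReal hfint hnnf, hval]


-- Gaussian integrals over Evec p
lemma gauss_integrable {p : ℕ} (u : ℝ) (hu : 0 < u) :
    Integrable (fun t : Evec p => Real.exp (-(u * ‖t‖^2))) := by
  have h := GaussianFourier.integrable_cexp_neg_mul_sq_norm_add (V := Evec p)
    (b := (u:ℂ)) (by simpa using hu) 0 0
  have := h.norm
  refine this.congr (Filter.Eventually.of_forall fun t => ?_)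
  simp [Complex.norm_exp]
  left; norm_cast

lemma gauss_cos_integral {p : ℕ} (u : ℝ) (hu : 0 < u) (x : Evec p) :
    ∫ t : Evec p, Real.cos ⟪x, t⟫ * Real.exp (-(u * ‖t‖^2))
      = (Real.pi/u) ^ ((p:ℝ)/2) * Real.exp (-(‖x‖^2/(4*u))) := by
  have hbre : 0 < ((u:ℂ)).re := by simpa using hu
  have hz := GaussianFourier.integral_cexp_neg_mul_sq_norm_add (V := Evec p) hbre Complex.I x
  have hint := GaussianFourier.integrable_cexp_neg_mul_sq_norm_add (V := Evec p) hbre Complex.I x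
  have hre := integral_re hint
  rw [hz] at hre
  have hfin : (Module.finrank ℝ (Evec p) : ℂ) = (p : ℂ) := by
    norm_cast; exact finrank_euclideanSpace_fin
  -- LHS of hre
  have hL : ∀ t : Evec p, RCLike.re (Complex.exp (-(u:ℂ) * ‖t‖^2 + Complex.I * ⟪x, t⟫))
      = Real.cos ⟪x, t⟫ * Real.exp (-(u * ‖t‖^2)) := by
    intro t
    have : (-(u:ℂ) * (‖t‖:ℂ)^2 + Complex.I * (⟪x, t⟫ : ℝ)) =
        Complex.ofReal (-(u * ‖t‖^2)) + Complex.ofReal (⟪x, t⟫) * Complex.I := by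
      push_cast; ring
    rw [this, Complex.exp_add, ← Complex.ofReal_exp]
    simp only [RCLike.re_to_complex, Complex.re_ofReal_mul, Complex.exp_ofReal_mul_I_re]
    ring
  simp only [hL] at hre
  rw [hre, hfin]
  have hI : Complex.I ^ 2 * (‖x‖:ℂ)^2 / (4 * (u:ℂ)) = Complex.ofReal (-(‖x‖^2/(4*u))) := by
    rw [Complex.I_sq]; push_cast; field_simp
  have hpos : (0:ℝ) < Real.pi / u := by positivity
  have hcast : ((Real.pi:ℂ) / (u:ℂ)) ^ ((p:ℂ)/2) = Complex.ofReal ((Real.pi/u) ^ ((p:ℝ)/2)) := by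
    rw [← Complex.ofReal_div, Complex.ofReal_cpow hpos.le]
    congr 1
    push_cast; ring
  have hprod : ((Real.pi:ℂ) / (u:ℂ)) ^ ((p:ℂ)/2) * Complex.exp (Complex.I ^ 2 * (‖x‖:ℂ)^2 / (4 * (u:ℂ)))
      = Complex.ofReal ((Real.pi/u) ^ ((p:ℝ)/2) * Real.exp (-(‖x‖^2/(4*u)))) := by
    rw [hI, hcast, ← Complex.ofReal_exp, ← Complex.ofReal_mul]
  rw [hprod]
  exact Complex.ofReal_re _

lemma gauss_one_integral {p : ℕ} (u : ℝ) (hu : 0 < u) :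
    ∫ t : Evec p, Real.exp (-(u * ‖t‖^2)) = (Real.pi/u) ^ ((p:ℝ)/2) := by
  have := GaussianFourier.integral_rexp_neg_mul_sq_norm (V := Evec p) hu
  rw [show (Module.finrank ℝ (Evec p) : ℝ) = (p:ℝ) by norm_cast; exact finrank_euclideanSpace_fin]
    at this
  rw [← this]
  congr 1 with t
  ring_nf

lemma gauss_cos_integrable {p : ℕ} (u : ℝ) (hu : 0 < u) (x : Evec p) :
    Integrable (fun t : Evec p => Real.cos ⟪x, t⟫ * Real.exp (-(u * ‖t‖^2))) := by
  refine (gauss_integrable u hu).mono' ?_ ?_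
  · apply Measurable.aestronglyMeasurable
    exact ((Real.measurable_cos.comp ((Continuous.inner continuous_const continuous_id).measurable)).mul
      (Real.measurable_exp.comp ((measurable_const.mul ((continuous_norm.measurable).pow_const 2)).neg)))
  · filter_upwards with t
    rw [Real.norm_eq_abs, abs_mul, Real.abs_exp]
    have h1 : |Real.cos ⟪x, t⟫| ≤ 1 := Real.abs_cos_le_one _
    have h2 : (0:ℝ) < Real.exp (-(u * ‖t‖^2)) := Real.exp_pos _
    nlinarith

lemma key_lintegral {p : ℕ} (hp : 1 ≤ p) (x : Evec p) (hx : x ≠ 0) :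
    ∫⁻ t : Evec p, ENNReal.ofReal ((1 - Real.cos ⟪x, t⟫) / ‖t‖ ^ (1 + p)) =
      ENNReal.ofReal (cConst p * ‖x‖) := by
  set q : ℝ := (1 + (p:ℝ)) / 2 with hq
  have hq1 : 1 ≤ q := by
    rw [hq]
    have : (1:ℝ) ≤ p := by exact_mod_cast hp
    linarith
  have hq0 : 0 < q := lt_of_lt_of_le one_pos hq1
  have hGpos : 0 < Real.Gamma q := Real.Gamma_pos_of_pos hq0
  set Φ : Evec p → ℝ → ℝ := fun t u =>
    (Real.Gamma q)⁻¹ * ((1 - Real.cos ⟪x, t⟫) * (u ^ (q-1) * Real.exp (-(‖t‖^2 * u)))) with hΦ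
  -- Claim 1
  have claim1 : ∀ t : Evec p, t ≠ 0 →
      ENNReal.ofReal ((1 - Real.cos ⟪x, t⟫) / ‖t‖ ^ (1 + p)) =
        ∫⁻ u in Ioi (0:ℝ), ENNReal.ofReal (Φ t u) := by
    intro t ht
    have hnt : (0:ℝ) < ‖t‖ := norm_pos_iff.mpr ht
    have hr : (0:ℝ) < ‖t‖^2 := by positivity
    have hint : IntegrableOn (fun u : ℝ => u ^ (q-1) * Real.exp (-(‖t‖^2 * u))) (Ioi 0) := by
      have h := integrableOn_rpow_mul_exp_neg_mul_rpow (p := 1) (s := q - 1) (b := ‖t‖^2)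
        (by linarith) (by norm_num) hr
      refine h.congr_fun (fun v hv => ?_) measurableSet_Ioi
      simp only [Real.rpow_one]
      ring_nf
    have hintΦ : IntegrableOn (fun u => Φ t u) (Ioi 0) :=
      (hint.const_mul _).const_mul _
    have hcos : Real.cos ⟪x, t⟫ ≤ 1 := Real.cos_le_one _
    have hnn : 0 ≤ᵐ[volume.restrict (Ioi (0:ℝ))] fun u => Φ t u := by
      filter_upwards [ae_restrict_mem measurableSet_Ioi] with u hu
      have h0 : (0:ℝ) < u := hu
      have := Real.exp_pos (-(‖t‖^2 * u))
      have h4 : (0:ℝ) ≤ u ^ (q-1) := Real.rpow_nonneg h0.le _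
      have h5 : (0:ℝ) ≤ (Real.Gamma q)⁻¹ := by positivity
      simp only [hΦ]
      exact mul_nonneg h5 (mul_nonneg (by linarith) (mul_nonneg h4 this.le))
    rw [← ofReal_integral_eq_lintegral_ofReal hintΦ hnn]
    congr 1
    simp only [hΦ]
    rw [integral_const_mul, integral_const_mul,
      Real.integral_rpow_mul_exp_neg_mul_Ioi (by linarith : (0:ℝ) < q) hr]
    have e1 : ((‖t‖:ℝ)^2) ^ q = ‖t‖ ^ (1+p) := by
      rw [← Real.rpow_natCast ‖t‖ 2, ← Real.rpow_mul hnt.le, ← Real.rpow_natCast ‖t‖ (1+p)]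
      congr 1
      rw [hq]
      push_cast
      ring
    rw [one_div, Real.inv_rpow hr.le, e1]
    field_simp
  -- a.e. inequality
  haveI : Nonempty (Fin p) := Fin.pos_iff_nonempty.mp hp
  haveI : Nontrivial (Evec p) := inferInstance
  have h0 : (volume : Measure (Evec p)) {0} = 0 := measure_singleton 0
  have hae : ∀ᵐ t : Evec p ∂volume, t ≠ 0 := by
    rw [ae_iff]
    simpa using h0
  rw [lintegral_congr_ae (hae.mono fun t ht => claim1 t ht)]
  -- swap
  have hmeas : Measurable (Function.uncurry fun (t : Evec p) (u : ℝ) => ENNReal.ofReal (Φ t u)) := by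
    apply ENNReal.measurable_ofReal.comp
    apply Measurable.const_mul
    apply Measurable.mul
    · exact (continuous_const.sub (Real.continuous_cos.comp
        (Continuous.inner continuous_const continuous_fst))).measurable
    · exact (measurable_snd.pow_const _).mul
        ((Real.continuous_exp.comp ((((continuous_norm.comp continuous_fst).pow 2).mul
          continuous_snd).neg)).measurable)
  rw [lintegral_lintegral_swap hmeas.aemeasurable]
  -- inner t-integral
  have claim4 : ∀ u ∈ Ioi (0:ℝ),
      ∫⁻ t : Evec p, ENNReal.ofReal (Φ t u) =
        ENNReal.ofReal (((Real.Gamma q)⁻¹ * Real.pi ^ ((p:ℝ)/2)) *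
          (u ^ (-(1:ℝ)/2) * (1 - Real.exp (-((‖x‖^2/4)/u))))) := by
    intro u hu
    have hupos : (0:ℝ) < u := hu
    have hrw : ∀ t : Evec p, Φ t u = ((Real.Gamma q)⁻¹ * u ^ (q-1)) *
        ((1 - Real.cos ⟪x, t⟫) * Real.exp (-(u * ‖t‖^2))) := by
      intro t; simp only [hΦ]; ring_nf
    simp_rw [hrw]
    have hsub : Integrable (fun t : Evec p =>
        (1 - Real.cos ⟪x, t⟫) * Real.exp (-(u * ‖t‖^2))) := by
      have : (fun t : Evec p => (1 - Real.cos ⟪x, t⟫) * Real.exp (-(u * ‖t‖^2)))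
          = fun t => Real.exp (-(u * ‖t‖^2)) - Real.cos ⟪x, t⟫ * Real.exp (-(u * ‖t‖^2)) := by
        funext t; ring
      rw [this]
      exact (gauss_integrable u hupos).sub (gauss_cos_integrable u hupos x)
    have hnn2 : 0 ≤ᵐ[volume] fun t : Evec p =>
        ((Real.Gamma q)⁻¹ * u ^ (q-1)) * ((1 - Real.cos ⟪x, t⟫) * Real.exp (-(u * ‖t‖^2))) := by
      filter_upwards with t
      have h1 : Real.cos ⟪x, t⟫ ≤ 1 := Real.cos_le_one _
      have h2 : (0:ℝ) ≤ Real.exp (-(u * ‖t‖^2)) := (Real.exp_pos _).le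
      have h3 : (0:ℝ) ≤ u ^ (q-1) := Real.rpow_nonneg hupos.le _
      have h5 : (0:ℝ) ≤ (Real.Gamma q)⁻¹ := by positivity
      exact mul_nonneg (mul_nonneg h5 h3) (mul_nonneg (by linarith) h2)
    rw [← ofReal_integral_eq_lintegral_ofReal (hsub.const_mul _) hnn2]
    congr 1
    rw [integral_const_mul]
    have hsplit : ∫ t : Evec p, (1 - Real.cos ⟪x, t⟫) * Real.exp (-(u * ‖t‖^2))
        = (Real.pi/u) ^ ((p:ℝ)/2) * (1 - Real.exp (-(‖x‖^2/(4*u)))) := by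
      have : (fun t : Evec p => (1 - Real.cos ⟪x, t⟫) * Real.exp (-(u * ‖t‖^2)))
          = fun t => Real.exp (-(u * ‖t‖^2)) - Real.cos ⟪x, t⟫ * Real.exp (-(u * ‖t‖^2)) := by
        funext t; ring
      rw [this, integral_sub (gauss_integrable u hupos) (gauss_cos_integrable u hupos x),
        gauss_one_integral u hupos, gauss_cos_integral u hupos x]
      ring
    rw [hsplit]
    have hdr : (Real.pi/u) ^ ((p:ℝ)/2) = Real.pi ^ ((p:ℝ)/2) * u ^ (-((p:ℝ)/2)) := by
      rw [Real.div_rpow Real.pi_pos.le hupos.le, Real.rpow_neg hupos.le, div_eq_mul_inv]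
    have hur : u ^ (q-1) * u ^ (-((p:ℝ)/2)) = u ^ (-(1:ℝ)/2) := by
      rw [← Real.rpow_add hupos]
      congr 1
      rw [hq]; push_cast; ring
    have hE : ‖x‖^2/(4*u) = (‖x‖^2/4)/u := by ring
    rw [hdr, hE]
    calc (Real.Gamma q)⁻¹ * u ^ (q-1) * (Real.pi ^ ((p:ℝ)/2) * u ^ (-((p:ℝ)/2)) * (1 - Real.exp (-((‖x‖^2/4)/u))))
        = (Real.Gamma q)⁻¹ * Real.pi ^ ((p:ℝ)/2) * ((u ^ (q-1) * u ^ (-((p:ℝ)/2))) * (1 - Real.exp (-((‖x‖^2/4)/u)))) := by ring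
      _ = (Real.Gamma q)⁻¹ * Real.pi ^ ((p:ℝ)/2) * (u ^ (-(1:ℝ)/2) * (1 - Real.exp (-((‖x‖^2/4)/u)))) := by rw [hur]
  rw [setLIntegral_congr_fun measurableSet_Ioi claim4]
  have hCnn : (0:ℝ) ≤ (Real.Gamma q)⁻¹ * Real.pi ^ ((p:ℝ)/2) := by positivity
  simp_rw [ENNReal.ofReal_mul hCnn]
  rw [lintegral_const_mul' _ _ ENNReal.ofReal_ne_top]
  have hc : (0:ℝ) < ‖x‖^2/4 := by
    have : (0:ℝ) < ‖x‖ := norm_pos_iff.mpr hx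
    positivity
  rw [lintegral_L3 hc, ← ENNReal.ofReal_mul hCnn]
  congr 1
  have hsq : Real.sqrt (‖x‖^2/4) = ‖x‖/2 := by
    rw [show ‖x‖^2/4 = (‖x‖/2)^2 by ring, Real.sqrt_sq (by positivity)]
  rw [hsq]
  have hpi : Real.pi ^ ((p:ℝ)/2) * Real.sqrt Real.pi = Real.pi ^ ((1 + (p:ℝ))/2) := by
    rw [Real.sqrt_eq_rpow, ← Real.rpow_add Real.pi_pos]
    congr 1; ring
  have : cConst p = Real.pi ^ ((1 + (p:ℝ))/2) / Real.Gamma q := rfl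
  rw [this]
  field_simp [← hpi]
  rw [Real.sqrt_eq_rpow, ← Real.rpow_add Real.pi_pos]; ring_nf

lemma cConst_pos (d : ℕ) : 0 < cConst d := by
  unfold cConst
  have h : (0:ℝ) < (1 + (d:ℝ))/2 := by positivity
  exact div_pos (Real.rpow_pos_of_pos Real.pi_pos _) (Real.Gamma_pos_of_pos h)

lemma integral_one_sub_cos {p : ℕ} (x : Evec p) :
    Integrable (fun t : Evec p => (1 - Real.cos ⟪x, t⟫) / ‖t‖ ^ (1 + p)) ∧
    ∫ t : Evec p, (1 - Real.cos ⟪x, t⟫) / ‖t‖ ^ (1 + p) = cConst p * ‖x‖ := by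
  rcases Nat.eq_zero_or_pos p with hp | hp
  · subst hp
    haveI : IsEmpty (Fin 0) := inferInstance
    have hx : x = 0 := Subsingleton.elim x 0
    have hfun : (fun t : Evec 0 => (1 - Real.cos ⟪x, t⟫) / ‖t‖ ^ (1 + 0)) = fun _ => 0 := by
      funext t
      rw [hx, inner_zero_left]
      simp
    rw [hfun, hx]
    simp [integrable_const]
  · rcases eq_or_ne x 0 with hx | hx
    · have hfun : (fun t : Evec p => (1 - Real.cos ⟪x, t⟫) / ‖t‖ ^ (1 + p)) = fun _ => 0 := by
        funext t
        rw [hx, inner_zero_left]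
        simp
      rw [hfun, hx]
      simp [integrable_const]
    · have hmeas : Measurable (fun t : Evec p => (1 - Real.cos ⟪x, t⟫) / ‖t‖ ^ (1 + p)) := by
        exact ((continuous_const.sub (Real.continuous_cos.comp
          (Continuous.inner continuous_const continuous_id))).measurable).div
          ((continuous_norm.pow _).measurable)
      have hnn : ∀ t : Evec p, 0 ≤ (1 - Real.cos ⟪x, t⟫) / ‖t‖ ^ (1 + p) := by
        intro t
        have := Real.cos_le_one (⟪x, t⟫ : ℝ)
        apply div_nonneg (by linarith) (by positivity)
      have hfin := key_lintegral hp x hx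
      have hint : Integrable (fun t : Evec p => (1 - Real.cos ⟪x, t⟫) / ‖t‖ ^ (1 + p)) := by
        refine ⟨hmeas.aestronglyMeasurable, ?_⟩
        rw [hasFiniteIntegral_iff_ofReal (Filter.Eventually.of_forall hnn), hfin]
        exact ENNReal.ofReal_lt_top
      refine ⟨hint, ?_⟩
      have h1 := ofReal_integral_eq_lintegral_ofReal hint (Filter.Eventually.of_forall hnn)
      rw [hfin] at h1
      have h2 : 0 ≤ ∫ t : Evec p, (1 - Real.cos ⟪x, t⟫) / ‖t‖ ^ (1 + p) :=
        integral_nonneg hnn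
      have h3 : 0 ≤ cConst p * ‖x‖ := mul_nonneg (cConst_pos p).le (norm_nonneg x)
      exact (ENNReal.ofReal_eq_ofReal_iff h2 h3).mp h1

end AuxSzekely

/-- (Proposition 1 of Huling and Mak, applied here): the weighted energy distance
between the weighted and unweighted empirical distributions of the `Xᵢ` equals the
stated integral of the weighted empirical characteristic functions. -/
theorem weighted_energy_distance_duality {p : ℕ} (n : ℕ) (hn : 1 ≤ n)
    (X : Fin n → Evec p) (w : Fin n → ℝ)
    (hw_nonneg : ∀ i, 0 ≤ w i) (hw_sum : ∑ i, w i = (n : ℝ)) :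
    energyX n X w =
      ∫ t : Evec p,
        ‖phiXw n X (fun _ => 1) t - phiXw n X w t‖ ^ 2
          / (cConst p * ‖t‖ ^ (1 + p)) := by
  set u : Fin n → ℝ := fun i => 1 - w i with hu
  have husum : ∑ i, u i = 0 := by
    simp only [hu, Finset.sum_sub_distrib, hw_sum]
    simp
  have hzero : ∑ j, ∑ k, u j * u k = 0 := by
    rw [← Finset.sum_mul_sum, husum, zero_mul]
  -- step a
  have hz : ∀ t : Evec p, phiXw n X (fun _ => 1) t - phiXw n X w t
      = (1/(n:ℂ)) * ∑ i, ((u i : ℝ) : ℂ) * Complex.exp (Complex.I * ((inner ℝ t (X i) : ℝ))) := by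
    intro t
    unfold phiXw
    rw [← mul_sub, ← Finset.sum_sub_distrib]
    congr 1
    refine Finset.sum_congr rfl fun i _ => ?_
    have : ((u i : ℝ) : ℂ) = 1 - (w i : ℂ) := by simp [hu]
    rw [this]; push_cast; ring
  -- step b
  have habs : ∀ t : Evec p, ‖phiXw n X (fun _ => 1) t - phiXw n X w t‖ ^ 2
      = (1/(n:ℝ)^2) * ∑ j, ∑ k, (u j * u k) * Real.cos ⟪X j - X k, t⟫ := by
    intro t
    rw [hz t, Complex.sq_norm, Complex.normSq_mul]
    have h1 : Complex.normSq (1/(n:ℂ)) = 1/(n:ℝ)^2 := by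
      rw [show (1/(n:ℂ)) = (((1/(n:ℝ)):ℝ):ℂ) by push_cast; ring, Complex.normSq_ofReal]
      ring
    rw [h1]
    congr 1
    set S := ∑ i, ((u i : ℝ) : ℂ) * Complex.exp (Complex.I * ((inner ℝ t (X i) : ℝ))) with hS
    have h2 : Complex.normSq S = (S * (starRingEnd ℂ) S).re := by
      rw [Complex.mul_conj, Complex.ofReal_re]
    rw [h2, hS, map_sum, Finset.sum_mul_sum, Complex.re_sum]
    refine Finset.sum_congr rfl fun j _ => ?_
    rw [Complex.re_sum]
    refine Finset.sum_congr rfl fun k _ => ?_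
    rw [map_mul, ← Complex.exp_conj]
    have h3 : (starRingEnd ℂ) (Complex.I * ((inner ℝ t (X k) : ℝ) : ℂ))
        = -Complex.I * ((inner ℝ t (X k) : ℝ) : ℂ) := by
      rw [map_mul, Complex.conj_I, Complex.conj_ofReal]
    rw [h3, Complex.conj_ofReal]
    have h4 : ((u j : ℝ) : ℂ) * Complex.exp (Complex.I * ((inner ℝ t (X j) : ℝ)))
          * (((u k : ℝ):ℂ) * Complex.exp (-Complex.I * ((inner ℝ t (X k) : ℝ))))
        = ((u j * u k : ℝ) : ℂ) * Complex.exp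
            ((((inner ℝ t (X j) : ℝ) - (inner ℝ t (X k) : ℝ) : ℝ) : ℂ) * Complex.I) := by
      have e1 : ((u j : ℝ) : ℂ) * Complex.exp (Complex.I * ((inner ℝ t (X j) : ℝ)))
          * (((u k : ℝ):ℂ) * Complex.exp (-Complex.I * ((inner ℝ t (X k) : ℝ))))
          = ((u j * u k : ℝ) : ℂ) * (Complex.exp (Complex.I * ((inner ℝ t (X j) : ℝ)))
            * Complex.exp (-Complex.I * ((inner ℝ t (X k) : ℝ)))) := by
        push_cast; ring
      rw [e1, ← Complex.exp_add]
      congr 1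
      push_cast; ring
    rw [h4, Complex.re_ofReal_mul, Complex.exp_ofReal_mul_I_re]
    congr 1
    rw [← inner_sub_right, real_inner_comm]
  -- step c : pointwise identity of integrands
  have hpt : ∀ t : Evec p,
      ‖phiXw n X (fun _ => 1) t - phiXw n X w t‖ ^ 2 / (cConst p * ‖t‖ ^ (1 + p))
      = ∑ j, ∑ k, (-(u j * u k) / (n:ℝ)^2 * (cConst p)⁻¹) *
          ((1 - Real.cos ⟪X j - X k, t⟫) / ‖t‖ ^ (1 + p)) := by
    intro t
    rw [habs t]
    have h5 : ∑ j, ∑ k, (u j * u k) * Real.cos ⟪X j - X k, t⟫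
        = ∑ j, ∑ k, -(u j * u k) * (1 - Real.cos ⟪X j - X k, t⟫) := by
      have h6 : ∀ j k : Fin n, -(u j * u k) * (1 - Real.cos ⟪X j - X k, t⟫)
          = u j * u k * Real.cos ⟪X j - X k, t⟫ - u j * u k := by
        intro j k; ring
      simp_rw [h6, Finset.sum_sub_distrib]
      rw [hzero, sub_zero]
    rw [h5, mul_div_assoc, Finset.sum_div, Finset.mul_sum]
    refine Finset.sum_congr rfl fun j _ => ?_
    rw [Finset.sum_div, Finset.mul_sum]
    refine Finset.sum_congr rfl fun k _ => ?_
    simp only [div_eq_mul_inv, mul_inv]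
    ring
  simp_rw [hpt]
  -- integrate the finite sum
  have hint : ∀ jk : Fin n × Fin n, Integrable (fun t : Evec p =>
      (-(u jk.1 * u jk.2) / (n:ℝ)^2 * (cConst p)⁻¹) *
        ((1 - Real.cos ⟪X jk.1 - X jk.2, t⟫) / ‖t‖ ^ (1 + p))) := by
    intro jk
    exact (integral_one_sub_cos (X jk.1 - X jk.2)).1.const_mul _
  have hsumform : ∀ t : Evec p, (∑ j, ∑ k, (-(u j * u k) / (n:ℝ)^2 * (cConst p)⁻¹) *
          ((1 - Real.cos ⟪X j - X k, t⟫) / ‖t‖ ^ (1 + p)))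
      = ∑ jk : Fin n × Fin n, (-(u jk.1 * u jk.2) / (n:ℝ)^2 * (cConst p)⁻¹) *
          ((1 - Real.cos ⟪X jk.1 - X jk.2, t⟫) / ‖t‖ ^ (1 + p)) := by
    intro t
    rw [← Finset.univ_product_univ, Finset.sum_product]
  simp_rw [hsumform]
  rw [integral_finset_sum Finset.univ (fun jk _ => hint jk)]
  have hterm : ∀ jk : Fin n × Fin n,
      ∫ t : Evec p, (-(u jk.1 * u jk.2) / (n:ℝ)^2 * (cConst p)⁻¹) *
          ((1 - Real.cos ⟪X jk.1 - X jk.2, t⟫) / ‖t‖ ^ (1 + p))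
      = (-(u jk.1 * u jk.2) / (n:ℝ)^2) * ‖X jk.1 - X jk.2‖ := by
    intro jk
    rw [integral_const_mul, (integral_one_sub_cos (X jk.1 - X jk.2)).2]
    have := (cConst_pos p).ne'
    field_simp
  simp_rw [hterm]
  -- finally, energyX equals this sum
  rw [← Finset.univ_product_univ, Finset.sum_product]
  have hsym : ∑ j, ∑ k, w k * ‖X j - X k‖ = ∑ j, ∑ k, w j * ‖X j - X k‖ := by
    rw [Finset.sum_comm]
    refine Finset.sum_congr rfl fun j _ => Finset.sum_congr rfl fun k _ => ?_
    rw [norm_sub_rev]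
  have hT : ∑ j, ∑ k, (-(u j * u k) / (n:ℝ)^2) * ‖X j - X k‖
      = (2/(n:ℝ)^2) * (∑ j, ∑ k, w j * ‖X j - X k‖)
        - (1/(n:ℝ)^2) * (∑ j, ∑ k, w j * w k * ‖X j - X k‖)
        - (1/(n:ℝ)^2) * (∑ j, ∑ k, ‖X j - X k‖)
        + ((1/(n:ℝ)^2) * (∑ j, ∑ k, w k * ‖X j - X k‖)
            - (1/(n:ℝ)^2) * (∑ j, ∑ k, w j * ‖X j - X k‖)) := by
    simp only [Finset.mul_sum, ← Finset.sum_add_distrib, ← Finset.sum_sub_distrib]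
    refine Finset.sum_congr rfl fun j _ => Finset.sum_congr rfl fun k _ => ?_
    simp only [hu]
    ring
  unfold energyX
  rw [hT, hsym, sub_self, add_zero]
end

section
/- Let g : ℝ^p → ℝ and h : ℝ → ℝ be measurable functions with E|g(X)| < ∞ and E|h(A)| < ∞. Then E[g(X) h(A) W] = E[g(X)] · E[h(A)], where W is the stabilized generalized propensity score weight. In particular, weighting by W renders X and A independent in the weighted population. -/
open MeasureTheory
open scoped BigOperators ENNReal

noncomputable section

/-- Marginal density of `X`: f_X(x) = ∫ f(x,a) dν(a). -/
def margX {p : ℕ} (ν : Measure ℝ) (f : Evec p × ℝ → ℝ) (x : Evec p) : ℝ :=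
  ∫ a, f (x, a) ∂ν

/-- Marginal density of `A`: f_A(a) = ∫ f(x,a) dμ(x). -/
def margA {p : ℕ} (μ : Measure (Evec p)) (f : Evec p × ℝ → ℝ) (a : ℝ) : ℝ :=
  ∫ x, f (x, a) ∂μ

/-- The stabilized generalized propensity score weight
W(x,a) = f_A(a)·f_X(x) / f_{X,A}(x,a). -/
def gpsWeight {p : ℕ} (μ : Measure (Evec p)) (ν : Measure ℝ)
    (f : Evec p × ℝ → ℝ) (z : Evec p × ℝ) : ℝ :=
  margA μ f z.2 * margX ν f z.1 / f z

/-- Weighting by the stabilized GPS weight `W` renders `X` and `A` independent: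
for integrable `g(X)` and `h(A)`, `E[g(X)h(A)W] = E[g(X)]·E[h(A)]`. Here the joint
law of `(X,A)` has density `f`, strictly positive a.e., with respect to a product
`μ ⊗ ν` of σ-finite measures. -/
theorem gps_weight_renders_independent {p : ℕ}
    (μ : Measure (Evec p)) (ν : Measure ℝ) [SigmaFinite μ] [SigmaFinite ν]
    (f : Evec p × ℝ → ℝ) (hf_meas : Measurable f)
    (hf_nonneg : ∀ z, 0 ≤ f z)
    (hf_pos : ∀ᵐ z ∂(μ.prod ν), 0 < f z)
    (hf_prob : ∫ z, f z ∂(μ.prod ν) = 1)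
    (g : Evec p → ℝ) (h : ℝ → ℝ) (hg : Measurable g) (hh : Measurable h)
    (hg_int : Integrable (fun z : Evec p × ℝ => g z.1 * f z) (μ.prod ν))
    (hh_int : Integrable (fun z : Evec p × ℝ => h z.2 * f z) (μ.prod ν)) :
    (∫ z : Evec p × ℝ, g z.1 * h z.2 * gpsWeight μ ν f z * f z ∂(μ.prod ν))
      = (∫ z : Evec p × ℝ, g z.1 * f z ∂(μ.prod ν))
          * (∫ z : Evec p × ℝ, h z.2 * f z ∂(μ.prod ν)) := by
  have hstep : (∫ z : Evec p × ℝ, g z.1 * h z.2 * gpsWeight μ ν f z * f z ∂(μ.prod ν))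
      = ∫ z : Evec p × ℝ, (fun x => g x * margX ν f x) z.1 *
          (fun a => h a * margA μ f a) z.2 ∂(μ.prod ν) := by
    refine integral_congr_ae ?_
    filter_upwards [hf_pos] with z hz
    simp only [gpsWeight]
    field_simp
  rw [hstep, integral_prod_mul (fun x => g x * margX ν f x) (fun a => h a * margA μ f a)]
  have hX : (∫ x, g x * margX ν f x ∂μ) = ∫ z : Evec p × ℝ, g z.1 * f z ∂(μ.prod ν) := by
    rw [integral_prod _ hg_int]
    refine integral_congr_ae (Filter.Eventually.of_forall fun x => ?_)
    simp [margX, integral_const_mul]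
  have hA : (∫ a, h a * margA μ f a ∂ν) = ∫ z : Evec p × ℝ, h z.2 * f z ∂(μ.prod ν) := by
    rw [integral_prod_symm _ hh_int]
    refine integral_congr_ae (Filter.Eventually.of_forall fun a => ?_)
    simp [margA, integral_const_mul]
  rw [hX, hA]
end
end

section
/- Let h : ℝ → ℝ be a measurable function with E|h(A)| < ∞. Then E[h(A) W] = E[h(A)], where W is the stabilized generalized propensity score weight; that is, weighting by W preserves the marginal distribution of A. -/
open MeasureTheory
open scoped BigOperators ENNReal

noncomputable section

/-- Weighting by the stabilized GPS weight `W` preserves the marginal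
distribution of `A`: for integrable `h(A)`, `E[h(A)W] = E[h(A)]`. -/
theorem gps_weight_preserves_marginal_A {p : ℕ}
    (μ : Measure (Evec p)) (ν : Measure ℝ) [SigmaFinite μ] [SigmaFinite ν]
    (f : Evec p × ℝ → ℝ) (hf_meas : Measurable f)
    (hf_nonneg : ∀ z, 0 ≤ f z)
    (hf_pos : ∀ᵐ z ∂(μ.prod ν), 0 < f z)
    (hf_prob : ∫ z, f z ∂(μ.prod ν) = 1)
    (h : ℝ → ℝ) (hh : Measurable h)
    (hh_int : Integrable (fun z : Evec p × ℝ => h z.2 * f z) (μ.prod ν)) :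
    (∫ z : Evec p × ℝ, h z.2 * gpsWeight μ ν f z * f z ∂(μ.prod ν))
      = ∫ z : Evec p × ℝ, h z.2 * f z ∂(μ.prod ν) := by
  have hf_int : Integrable f (μ.prod ν) := by
    by_contra hc
    rw [integral_undef hc] at hf_prob
    norm_num at hf_prob
  have key : (fun z : Evec p × ℝ => h z.2 * gpsWeight μ ν f z * f z)
      =ᵐ[μ.prod ν] fun z => margX ν f z.1 * (h z.2 * margA μ f z.2) := by
    filter_upwards [hf_pos] with z hz
    have hne : f z ≠ 0 := ne_of_gt hz
    unfold gpsWeight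
    field_simp
  rw [integral_congr_ae key, integral_prod_mul (fun x => margX ν f x)
    (fun a => h a * margA μ f a)]
  have h1 : (∫ x, margX ν f x ∂μ) = 1 := by
    rw [← hf_prob, integral_prod f hf_int]
    rfl
  rw [h1, one_mul]
  have h2 : (∫ z : Evec p × ℝ, h z.2 * f z ∂(μ.prod ν))
      = ∫ a, ∫ x, h a * f (x, a) ∂μ ∂ν := by
    exact integral_prod_symm _ hh_int
  rw [h2]
  congr 1
  ext a
  rw [margA, integral_const_mul]
end
end

section
/- Let n ≥ 1, let X_1,…,X_n ∈ ℝ^p and A_1,…,A_n ∈ ℝ, and let λ ≥ 0. Let Q_X = (‖X_k − X_ℓ‖_2)_{k,ℓ} and Q_A = (|A_k − A_ℓ|)_{k,ℓ} be the Euclidean distance matrices, let C = (C_{kℓ}) and D = (D_{kℓ}) be the doubly-centered distance matrices, let C∘D denote the elementwise product, and set P = (1/n²)(C∘D) − (1/n²)Q_A − (1/n²)Q_X + (λ/n²)I_n and q = (2/n²)(Q_A + Q_X)𝟏. Then for every w ∈ ℝ^n: D(w) + (λ/n²)∑_{i=1}^n w_i² = wᵀ P w + qᵀ w − (1/n²)𝟏ᵀ(Q_A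 + Q_X)𝟏. In particular V²_{n,w}(X,A) = (1/n²) wᵀ (C∘D) w, and E(F^n_{A,w}, F^n_A) = −(1/n²)wᵀQ_A w + (2/n²)𝟏ᵀQ_A w − (1/n²)𝟏ᵀQ_A𝟏, and analogously for X. -/
open MeasureTheory Finset Filter
open scoped BigOperators RealInnerProductSpace ENNReal

/-- Quadratic-program representation of the (penalized) dependence criterion:
with `P = (1/n²)(C∘D) − (1/n²)Q_A − (1/n²)Q_X + (λ/n²)Iₙ` and
`q = (2/n²)(Q_A + Q_X)𝟏`, one has
`D(w) + (λ/n²)∑ wᵢ² = wᵀPw + qᵀw − (1/n²)𝟏ᵀ(Q_A + Q_X)𝟏`, and the weighted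
distance covariance and weighted energy distances are the stated quadratic
forms in `w`. -/
theorem dependence_criterion_quadratic_program {p : ℕ} (n : ℕ) (hn : 1 ≤ n)
    (X : Fin n → Evec p) (A : Fin n → ℝ) (lam : ℝ) (hlam : 0 ≤ lam)
    (QX : Fin n → Fin n → ℝ) (hQX : ∀ k l, QX k l = ‖X k - X l‖)
    (QA : Fin n → Fin n → ℝ) (hQA : ∀ k l, QA k l = |A k - A l|)
    (P : Fin n → Fin n → ℝ)
    (hP : ∀ k l, P k l =
      (1 / (n : ℝ) ^ 2) * (Cmat n X k l * Dmat n A k l)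
        - (1 / (n : ℝ) ^ 2) * QA k l - (1 / (n : ℝ) ^ 2) * QX k l
        + (lam / (n : ℝ) ^ 2) * (if k = l then 1 else 0))
    (q : Fin n → ℝ)
    (hq : ∀ i, q i = (2 / (n : ℝ) ^ 2) * ∑ j, (QA i j + QX i j)) :
    (∀ w : Fin n → ℝ,
      Dcrit n X A w + (lam / (n : ℝ) ^ 2) * ∑ i, (w i) ^ 2 =
        (∑ k, ∑ l, w k * P k l * w l) + (∑ i, q i * w i)
          - (1 / (n : ℝ) ^ 2) * ∑ i, ∑ j, (QA i j + QX i j))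
    ∧ (∀ w : Fin n → ℝ,
        Vnw n X A w = (1 / (n : ℝ) ^ 2) * ∑ k, ∑ l, w k * (Cmat n X k l * Dmat n A k l) * w l)
    ∧ (∀ w : Fin n → ℝ,
        energyA n A w =
          -(1 / (n : ℝ) ^ 2) * (∑ k, ∑ l, w k * QA k l * w l)
            + (2 / (n : ℝ) ^ 2) * (∑ k, ∑ l, QA k l * w l)
            - (1 / (n : ℝ) ^ 2) * ∑ k, ∑ l, QA k l)
    ∧ (∀ w : Fin n → ℝ,
        energyX n X w =
          -(1 / (n : ℝ) ^ 2) * (∑ k, ∑ l, w k * QX k l * w l)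
            + (2 / (n : ℝ) ^ 2) * (∑ k, ∑ l, QX k l * w l)
            - (1 / (n : ℝ) ^ 2) * ∑ k, ∑ l, QX k l) := by
  have hsymA : ∀ k l : Fin n, |A k - A l| = |A l - A k| := fun k l => abs_sub_comm _ _
  have hsymX : ∀ k l : Fin n, ‖X k - X l‖ = ‖X l - X k‖ := fun k l => norm_sub_rev _ _
  have hV : ∀ w : Fin n → ℝ,
      Vnw n X A w = (1 / (n : ℝ) ^ 2) * ∑ k, ∑ l, w k * (Cmat n X k l * Dmat n A k l) * w l := by
    intro w
    unfold Vnw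
    congr 1
    refine Finset.sum_congr rfl fun k _ => Finset.sum_congr rfl fun l _ => by ring
  have hswapA : ∀ w : Fin n → ℝ,
      ∑ i, ∑ j, w i * |A i - A j| = ∑ k, ∑ l, |A k - A l| * w l := by
    intro w
    rw [Finset.sum_comm]
    refine Finset.sum_congr rfl fun k _ => Finset.sum_congr rfl fun l _ => by
      rw [hsymA l k]; ring
  have hswapX : ∀ w : Fin n → ℝ,
      ∑ i, ∑ j, w i * ‖X i - X j‖ = ∑ k, ∑ l, ‖X k - X l‖ * w l := by
    intro w
    rw [Finset.sum_comm]
    refine Finset.sum_congr rfl fun k _ => Finset.sum_congr rfl fun l _ => by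
      rw [hsymX l k]; ring
  have hEA : ∀ w : Fin n → ℝ,
      energyA n A w =
        -(1 / (n : ℝ) ^ 2) * (∑ k, ∑ l, w k * QA k l * w l)
          + (2 / (n : ℝ) ^ 2) * (∑ k, ∑ l, QA k l * w l)
          - (1 / (n : ℝ) ^ 2) * ∑ k, ∑ l, QA k l := by
    intro w
    unfold energyA
    simp only [hQA]
    rw [hswapA w]
    have : ∑ i, ∑ j, w i * w j * |A i - A j| = ∑ k, ∑ l, w k * |A k - A l| * w l := by
      refine Finset.sum_congr rfl fun k _ => Finset.sum_congr rfl fun l _ => by ring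
    rw [this]; ring
  have hEX : ∀ w : Fin n → ℝ,
      energyX n X w =
        -(1 / (n : ℝ) ^ 2) * (∑ k, ∑ l, w k * QX k l * w l)
          + (2 / (n : ℝ) ^ 2) * (∑ k, ∑ l, QX k l * w l)
          - (1 / (n : ℝ) ^ 2) * ∑ k, ∑ l, QX k l := by
    intro w
    unfold energyX
    simp only [hQX]
    rw [hswapX w]
    have : ∑ i, ∑ j, w i * w j * ‖X i - X j‖ = ∑ k, ∑ l, w k * ‖X k - X l‖ * w l := by
      refine Finset.sum_congr rfl fun k _ => Finset.sum_congr rfl fun l _ => by ring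
    rw [this]; ring
  refine ⟨?_, hV, hEA, hEX⟩
  intro w
  have hPsum : ∑ k, ∑ l, w k * P k l * w l =
      (1 / (n : ℝ) ^ 2) * (∑ k, ∑ l, w k * (Cmat n X k l * Dmat n A k l) * w l)
        - (1 / (n : ℝ) ^ 2) * (∑ k, ∑ l, w k * QA k l * w l)
        - (1 / (n : ℝ) ^ 2) * (∑ k, ∑ l, w k * QX k l * w l)
        + (lam / (n : ℝ) ^ 2) * ∑ i, (w i) ^ 2 := by
    have : ∀ k, ∑ l, w k * P k l * w l =
        ∑ l, ((1 / (n : ℝ) ^ 2) * (w k * (Cmat n X k l * Dmat n A k l) * w l)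
          - (1 / (n : ℝ) ^ 2) * (w k * QA k l * w l)
          - (1 / (n : ℝ) ^ 2) * (w k * QX k l * w l))
          + (lam / (n : ℝ) ^ 2) * (w k) ^ 2 := by
      intro k
      have h1 : ∑ l, w k * ((lam / (n : ℝ) ^ 2) * (if k = l then 1 else 0)) * w l
          = (lam / (n : ℝ) ^ 2) * (w k) ^ 2 := by
        rw [Finset.sum_eq_single k]
        · simp [sq]; ring_nf
        · intro b _ hb; simp [Ne.symm hb]
        · simp
      calc ∑ l, w k * P k l * w l
          = ∑ l, (((1 / (n : ℝ) ^ 2) * (w k * (Cmat n X k l * Dmat n A k l) * w l)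
              - (1 / (n : ℝ) ^ 2) * (w k * QA k l * w l)
              - (1 / (n : ℝ) ^ 2) * (w k * QX k l * w l))
              + w k * ((lam / (n : ℝ) ^ 2) * (if k = l then 1 else 0)) * w l) := by
            refine Finset.sum_congr rfl fun l _ => by rw [hP]; ring
        _ = _ := by rw [Finset.sum_add_distrib, h1]
    rw [Finset.sum_congr rfl fun k _ => this k, Finset.sum_add_distrib]
    simp only [Finset.sum_sub_distrib, Finset.mul_sum]
  have hqsum : ∑ i, q i * w i =
      (2 / (n : ℝ) ^ 2) * (∑ k, ∑ l, QA k l * w l)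
        + (2 / (n : ℝ) ^ 2) * (∑ k, ∑ l, QX k l * w l) := by
    have hs : ∑ i, (∑ j, (QA i j + QX i j)) * w i
        = ∑ k, ∑ l, QA k l * w l + ∑ k, ∑ l, QX k l * w l := by
      rw [Finset.sum_comm (f := fun k l => QA k l * w l),
        Finset.sum_comm (f := fun k l => QX k l * w l), ← Finset.sum_add_distrib]
      refine Finset.sum_congr rfl fun i _ => ?_
      rw [Finset.sum_mul, ← Finset.sum_add_distrib]
      refine Finset.sum_congr rfl fun j _ => ?_
      rw [hQA, hQA, hQX, hQX, hsymA j i, hsymX j i]; ring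
    simp only [hq]
    rw [Finset.sum_congr rfl fun i _ => (by ring :
      (2 / (n : ℝ) ^ 2) * (∑ j, (QA i j + QX i j)) * w i
        = (2 / (n : ℝ) ^ 2) * ((∑ j, (QA i j + QX i j)) * w i)), ← Finset.mul_sum, hs]
    ring
  have hconst : ∑ i, ∑ j, (QA i j + QX i j) = (∑ k, ∑ l, QA k l) + (∑ k, ∑ l, QX k l) := by
    simp [Finset.sum_add_distrib]
  unfold Dcrit
  rw [hV w, hEA w, hEX w, hPsum, hqsum, hconst]
  ring
end
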